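/- arXiv:1502.01293 — 3 statements merged into one kernel-verified Lean document; each statement's English description precedes it below -/
import Mathlib

section
/- Let α ≥ β ≥ -1/2 be real with α > -1/2 and ρ = α + β + 1. There exist constants 0 < c ≤ C such that for every real λ with |λ| ≥ 1, c·|λ|^(-2) ≤ |c_{α,β}(λ)|^(-2)·|c_{α+1,β+1}(λ)|^(2) ≤ C·|λ|^(-2); that is, the quotient of the Plancherel densities |c_{α,β}(λ)|^(-2) and |c_{α+1,β+1}(λ)|^(-2) decays like |λ|^(-2) as |λ| → ∞ along the real axis. -/
open Complex

/-- The Harish-Chandra c-function of Cherednik–Opdam analysis on the real line,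
`c_{α,β}(λ) = Γ(α+1)·2^(ρ−iλ)·Γ(iλ) / (Γ((ρ+iλ)/2)·Γ((α−β+1+iλ)/2))`
with `ρ = α+β+1`. -/
noncomputable def cherednikC (α β : ℝ) (lam : ℂ) : ℂ :=
  Complex.Gamma ((α : ℂ) + 1) * (2 : ℂ) ^ (((α : ℂ) + (β : ℂ) + 1) - Complex.I * lam) *
      Complex.Gamma (Complex.I * lam) /
    (Complex.Gamma ((((α : ℂ) + (β : ℂ) + 1) + Complex.I * lam) / 2) *
      Complex.Gamma ((((α : ℂ) - (β : ℂ) + 1) + Complex.I * lam) / 2))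

lemma gamma_ne_zero_of_im (z : ℂ) (hz : z.im ≠ 0) : Complex.Gamma z ≠ 0 := by
  refine Complex.Gamma_ne_zero fun n h => hz ?_
  rw [h]; simp

lemma cherednik_shift (α β : ℝ) (hα : -(1/2 : ℝ) < α) (lam : ℝ) (hlam : lam ≠ 0) :
    cherednikC (α + 1) (β + 1) (lam : ℂ) =
      (8 * ((α : ℂ) + 1) / (((α : ℂ) + (β : ℂ) + 1) + Complex.I * lam)) *
        cherednikC α β (lam : ℂ) := by
  have him : (Complex.I * (lam : ℂ)).im = lam := by simp
  have hz : ((((α : ℂ) + (β : ℂ) + 1) + Complex.I * lam) / 2) ≠ 0 := by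
    intro h
    have : ((((α : ℂ) + (β : ℂ) + 1) + Complex.I * lam) / 2).im = 0 := by rw [h]; simp
    simp [Complex.div_im, him] at this
    exact hlam this
  have hρz : (((α : ℂ) + (β : ℂ) + 1) + Complex.I * lam) ≠ 0 := by
    intro h; apply hz; rw [h]; simp
  have hα1 : ((α : ℂ) + 1) ≠ 0 := by
    intro h
    have : ((α : ℂ) + 1).re = 0 := by rw [h]; simp
    simp at this
    linarith
  have hG1 : Complex.Gamma ((α : ℂ) + 1 + 1) = ((α : ℂ) + 1) * Complex.Gamma ((α : ℂ) + 1) :=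
    Complex.Gamma_add_one _ hα1
  have hG2 : Complex.Gamma (((((α : ℝ) + 1 : ℝ) : ℂ) + (((β : ℝ) + 1 : ℝ) : ℂ) + 1 +
        Complex.I * lam) / 2) =
      ((((α : ℂ) + (β : ℂ) + 1) + Complex.I * lam) / 2) *
        Complex.Gamma ((((α : ℂ) + (β : ℂ) + 1) + Complex.I * lam) / 2) := by
    have harg : (((((α : ℝ) + 1 : ℝ) : ℂ) + (((β : ℝ) + 1 : ℝ) : ℂ) + 1 + Complex.I * lam) / 2)
        = ((((α : ℂ) + (β : ℂ) + 1) + Complex.I * lam) / 2) + 1 := by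
      push_cast; ring
    rw [harg, Complex.Gamma_add_one _ hz]
  have hcpow : (2 : ℂ) ^ ((((α : ℝ) + 1 : ℝ) : ℂ) + (((β : ℝ) + 1 : ℝ) : ℂ) + 1 -
        Complex.I * lam) =
      4 * (2 : ℂ) ^ (((α : ℂ) + (β : ℂ) + 1) - Complex.I * lam) := by
    have harg : ((((α : ℝ) + 1 : ℝ) : ℂ) + (((β : ℝ) + 1 : ℝ) : ℂ) + 1 - Complex.I * lam)
        = (2 : ℂ) + ((((α : ℂ) + (β : ℂ) + 1) - Complex.I * lam)) := by
      push_cast; ring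
    rw [harg, Complex.cpow_add _ _ (by norm_num)]
    norm_num
  have h3arg : (((((α : ℝ) + 1 : ℝ) : ℂ) - (((β : ℝ) + 1 : ℝ) : ℂ) + 1 + Complex.I * lam) / 2)
      = ((((α : ℂ) - (β : ℂ) + 1) + Complex.I * lam) / 2) := by
    push_cast; ring
  have h1arg : ((((α : ℝ) + 1 : ℝ) : ℂ) + 1) = ((α : ℂ) + 1 + 1) := by push_cast; ring
  unfold cherednikC
  rw [h1arg, hG1, hG2, hcpow, h3arg]
  have hGden1 : Complex.Gamma ((((α : ℂ) + (β : ℂ) + 1) + Complex.I * lam) / 2) ≠ 0 := by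
    apply gamma_ne_zero_of_im
    simp [Complex.div_im, him]
    exact hlam
  have hGden2 : Complex.Gamma ((((α : ℂ) - (β : ℂ) + 1) + Complex.I * lam) / 2) ≠ 0 := by
    apply gamma_ne_zero_of_im
    simp [Complex.div_im, him]
    exact hlam
  field_simp
  ring

lemma cherednik_ne_zero (α β : ℝ) (hα : -(1/2 : ℝ) < α) (lam : ℝ) (hlam : lam ≠ 0) :
    cherednikC α β (lam : ℂ) ≠ 0 := by
  have him : (Complex.I * (lam : ℂ)).im = lam := by simp
  have hα1 : Complex.Gamma ((α : ℂ) + 1) ≠ 0 := by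
    refine Complex.Gamma_ne_zero fun n h => ?_
    have : ((α : ℂ) + 1).re = (-(n : ℂ)).re := by rw [h]
    simp at this
    have : (0:ℝ) ≤ (n:ℝ) := by positivity
    linarith
  have hp : (2 : ℂ) ^ (((α : ℂ) + (β : ℂ) + 1) - Complex.I * lam) ≠ 0 := by
    rw [Complex.cpow_def_of_ne_zero (by norm_num)]
    exact Complex.exp_ne_zero _
  have hG : Complex.Gamma (Complex.I * (lam : ℂ)) ≠ 0 := by
    apply gamma_ne_zero_of_im; rw [him]; exact hlam
  have hGden1 : Complex.Gamma ((((α : ℂ) + (β : ℂ) + 1) + Complex.I * lam) / 2) ≠ 0 := by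
    apply gamma_ne_zero_of_im; simp [Complex.div_im, him]; exact hlam
  have hGden2 : Complex.Gamma ((((α : ℂ) - (β : ℂ) + 1) + Complex.I * lam) / 2) ≠ 0 := by
    apply gamma_ne_zero_of_im; simp [Complex.div_im, him]; exact hlam
  unfold cherednikC
  exact div_ne_zero (mul_ne_zero (mul_ne_zero hα1 hp) hG) (mul_ne_zero hGden1 hGden2)

/-- The quotient `|c_{α,β}(λ)|⁻² / |c_{α+1,β+1}(λ)|⁻²` of the Plancherel densities
decays like `|λ|⁻²` for `|λ| ≥ 1` on the real axis. -/
theorem cherednik_plancherelDensity_quotient_decay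
    (α β : ℝ) (hβ : -(1/2 : ℝ) ≤ β) (hβα : β ≤ α) (hα : -(1/2 : ℝ) < α)
    (ρ : ℝ) (hρ : ρ = α + β + 1) :
    ∃ c C : ℝ, 0 < c ∧ c ≤ C ∧ ∀ lam : ℝ, 1 ≤ |lam| →
      c * |lam| ^ (-2 : ℝ) ≤
        (‖cherednikC α β (lam : ℂ)‖) ^ (-2 : ℝ) *
          (‖cherednikC (α + 1) (β + 1) (lam : ℂ)‖) ^ (2 : ℝ) ∧
      (‖cherednikC α β (lam : ℂ)‖) ^ (-2 : ℝ) *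
          (‖cherednikC (α + 1) (β + 1) (lam : ℂ)‖) ^ (2 : ℝ) ≤
        C * |lam| ^ (-2 : ℝ) := by
  refine ⟨64 * (α + 1)^2 / (1 + ρ^2), 64 * (α + 1)^2, ?_, ?_, ?_⟩
  · have : 0 < α + 1 := by linarith
    positivity
  · rw [div_le_iff₀ (by positivity)]
    nlinarith [sq_nonneg ρ, sq_nonneg (α+1)]
  · intro lam hlam
    have hlam0 : lam ≠ 0 := by
      intro h; rw [h] at hlam; simp at hlam; linarith
    have habs : 0 < |lam| := by positivity
    have hc0 : ‖cherednikC α β (lam : ℂ)‖ ≠ 0 := by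
      simpa using cherednik_ne_zero α β hα lam hlam0
    have hcpos : 0 < ‖cherednikC α β (lam : ℂ)‖ :=
      lt_of_le_of_ne (norm_nonneg _) (Ne.symm hc0)
    have hshift := cherednik_shift α β hα lam hlam0
    -- |ρ + i λ|² = ρ² + λ²
    have hden : ‖((α : ℂ) + (β : ℂ) + 1) + Complex.I * lam‖
        = Real.sqrt (ρ^2 + lam^2) := by
      have : (((α : ℂ) + (β : ℂ) + 1) + Complex.I * lam) = ⟨ρ, lam⟩ := by
        apply Complex.ext <;> simp [hρ]
      rw [this, Complex.norm_def, Complex.normSq_mk]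
      ring_nf
    have hdpos : 0 < Real.sqrt (ρ^2 + lam^2) := by
      apply Real.sqrt_pos.mpr
      nlinarith [sq_nonneg ρ]
    set k : ℝ := 8 * (α + 1) / Real.sqrt (ρ^2 + lam^2) with hk
    have hkpos : 0 < k := by
      apply div_pos (by linarith) hdpos
    have habs' : ‖cherednikC (α + 1) (β + 1) (lam : ℂ)‖
        = k * ‖cherednikC α β (lam : ℂ)‖ := by
      rw [hshift, norm_mul, norm_div, hden]
      congr 1
      have h8 : (8 * ((α : ℂ) + 1)) = ((8 * (α + 1) : ℝ) : ℂ) := by push_cast; ring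
      rw [h8, Complex.norm_real, Real.norm_eq_abs, _root_.abs_of_nonneg (by linarith : (0:ℝ) ≤ 8 * (α + 1))]
    -- compute the quotient
    have hquot : (‖cherednikC α β (lam : ℂ)‖) ^ (-2 : ℝ) *
          (‖cherednikC (α + 1) (β + 1) (lam : ℂ)‖) ^ (2 : ℝ)
        = 64 * (α + 1)^2 / (ρ^2 + lam^2) := by
      rw [habs', Real.mul_rpow hkpos.le (norm_nonneg _),
        Real.rpow_neg (norm_nonneg _)]
      rw [show ((2:ℝ)) = ((2:ℕ):ℝ) by norm_num, Real.rpow_natCast, Real.rpow_natCast]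
      have hksq : k^2 = 64 * (α+1)^2 / (ρ^2 + lam^2) := by
        have hs : Real.sqrt (ρ^2 + lam^2) ^ 2 = ρ^2 + lam^2 :=
          Real.sq_sqrt (by positivity)
        rw [hk, div_pow, hs]
        ring
      have hfin : (‖cherednikC α β (lam : ℂ)‖ ^ 2)⁻¹ *
          (k ^ 2 * ‖cherednikC α β (lam : ℂ)‖ ^ 2) = k ^ 2 := by
        field_simp
      rw [hfin, hksq]
    have hL2 : |lam| ^ (-2 : ℝ) = (lam^2)⁻¹ := by
      rw [Real.rpow_neg (abs_nonneg _), show ((2:ℝ)) = ((2:ℕ):ℝ) by norm_num,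
        Real.rpow_natCast, _root_.sq_abs]
    have hlamsq : 1 ≤ lam^2 := by nlinarith [_root_.sq_abs lam]
    have hsum : 0 < ρ^2 + lam^2 := by nlinarith [sq_nonneg ρ]
    have hl2 : (0:ℝ) < lam^2 := by positivity
    constructor
    · rw [hquot, hL2]
      have heq : 64 * (α+1)^2 / (1 + ρ^2) * (lam^2)⁻¹
          = 64 * (α+1)^2 / ((1 + ρ^2) * lam^2) := by
        rw [div_mul_eq_div_div]
        field_simp
      rw [heq]
      apply div_le_div_of_nonneg_left (by positivity) hsum
      nlinarith [sq_nonneg ρ]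
    · rw [hquot, hL2, div_le_iff₀ hsum]
      have h2 : lam^2 ≤ ρ^2 + lam^2 := by nlinarith [sq_nonneg ρ]
      calc 64*(α+1)^2 = 64*(α+1)^2 * (lam^2)⁻¹ * lam^2 := by field_simp
        _ ≤ 64*(α+1)^2 * (lam^2)⁻¹ * (ρ^2+lam^2) :=
            mul_le_mul_of_nonneg_left h2 (by positivity)
end

section
/- Let α ≥ β ≥ -1/2 be real with α > -1/2 and ρ = α + β + 1. The function λ ↦ |1 − ρ/(iλ)| · |c_{α,β}(λ)|^(-2) on ℝ \ {0} (extended by 0 at λ = 0) is Lebesgue-integrable on the interval [-1, 1]; in other words, the non-symmetric Plancherel density λ ↦ (1 − ρ/(iλ)) / (8π·|c_{α,β}(λ)|²) is locally integrable near 0. -/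
open Complex MeasureTheory

private lemma gamma_aux_ne_pole {s : ℂ} (hs : 0 < s.re) : ∀ m : ℕ, s ≠ -m := by
  intro m h
  rw [h] at hs
  simp at hs
  have : (0:ℝ) ≤ m := Nat.cast_nonneg m
  linarith

private lemma gamma_cont {f : ℝ → ℂ} (hf : Continuous f) (h : ∀ x, 0 < (f x).re) :
    Continuous fun x => Complex.Gamma (f x) := by
  rw [continuous_iff_continuousAt]
  intro x
  exact (Complex.differentiableAt_Gamma _ (gamma_aux_ne_pole (h x))).continuousAt.comp
    hf.continuousAt

private lemma key_identity (r L A B G C D : ℂ) (hL : L ≠ 0) (hA : A ≠ 0) (hB : B ≠ 0)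
    (hC : C ≠ 0) (hD : D ≠ 0) (hG : G ≠ 0) :
    (L - r) * L * (C * D) ^ 2 / (A * B * (L * G)) ^ 2
      = (1 - r / L) / (A * B * G / (C * D)) ^ 2 := by
  field_simp

set_option maxHeartbeats 800000 in
/-- The non-symmetric Plancherel density `λ ↦ |1 − ρ/(iλ)|·|c_{α,β}(λ)|⁻²`
(extended by `0` at `λ = 0`) is Lebesgue-integrable on `[-1, 1]`. -/
theorem cherednik_nonsymmetric_plancherelDensity_locally_integrable
    (α β : ℝ) (hβ : -(1/2 : ℝ) ≤ β) (hβα : β ≤ α) (hα : -(1/2 : ℝ) < α)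
    (ρ : ℝ) (hρ : ρ = α + β + 1) :
    IntegrableOn
      (fun lam : ℝ => if lam = 0 then 0 else
        ‖1 - (ρ : ℂ) / (Complex.I * (lam : ℂ))‖ *
          ‖cherednikC α β (lam : ℂ)‖ ^ (-2 : ℝ))
      (Set.Icc (-1 : ℝ) 1) volume := by
  have hρ0 : 0 < ρ := by rw [hρ]; linarith
  -- the continuous comparison function
  set g : ℝ → ℝ := fun lam =>
    ‖(Complex.I * lam - (ρ:ℂ)) * (Complex.I * lam) *
      (Complex.Gamma ((((α:ℂ) + (β:ℂ) + 1) + Complex.I * lam) / 2) *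
        Complex.Gamma ((((α:ℂ) - (β:ℂ) + 1) + Complex.I * lam) / 2)) ^ 2 /
      (Complex.Gamma ((α:ℂ) + 1) * (2:ℂ) ^ (((α:ℂ) + (β:ℂ) + 1) - Complex.I * lam) *
        Complex.Gamma (Complex.I * lam + 1)) ^ 2‖ with hgdef
  have hIl : Continuous fun x : ℝ => Complex.I * (x:ℂ) :=
    continuous_const.mul Complex.continuous_ofReal
  have hre1 : ∀ x : ℝ, (0:ℝ) < (((((α:ℂ) + (β:ℂ) + 1) + Complex.I * x) / 2)).re := by
    intro x
    have : (((((α:ℂ) + (β:ℂ) + 1) + Complex.I * x) / 2)).re = (α + β + 1) / 2 := by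
      simp [Complex.div_re, Complex.normSq_apply]
    rw [this]; linarith
  have hre2 : ∀ x : ℝ, (0:ℝ) < (((((α:ℂ) - (β:ℂ) + 1) + Complex.I * x) / 2)).re := by
    intro x
    have : (((((α:ℂ) - (β:ℂ) + 1) + Complex.I * x) / 2)).re = (α - β + 1) / 2 := by
      simp [Complex.div_re, Complex.normSq_apply]
    rw [this]; linarith
  have hre3 : ∀ x : ℝ, (0:ℝ) < ((Complex.I * (x:ℂ) + 1)).re := by
    intro x; simp
  have hreA : (0:ℝ) < (((α:ℂ) + 1)).re := by simp; linarith
  have hA : Complex.Gamma ((α:ℂ) + 1) ≠ 0 := Complex.Gamma_ne_zero_of_re_pos hreA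
  have hB : ∀ x : ℝ, (2:ℂ) ^ (((α:ℂ) + (β:ℂ) + 1) - Complex.I * x) ≠ 0 := by
    intro x
    rw [Complex.cpow_def_of_ne_zero (by norm_num)]
    exact Complex.exp_ne_zero _
  have hgc : Continuous g := by
    apply continuous_norm.comp
    apply Continuous.div
    · exact ((hIl.sub continuous_const).mul hIl).mul
        (((gamma_cont ((continuous_const.add hIl).div_const 2) hre1).mul
          (gamma_cont ((continuous_const.add hIl).div_const 2) hre2)).pow 2)
    · exact (((continuous_const.mul (Continuous.const_cpow (continuous_const.sub hIl) (Or.inl (by norm_num)))).mul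
        (gamma_cont (hIl.add continuous_const) hre3)).pow 2)
    · intro x
      exact pow_ne_zero _ (mul_ne_zero (mul_ne_zero hA (hB x))
        (Complex.Gamma_ne_zero_of_re_pos (hre3 x)))
  have hgint : IntegrableOn g (Set.Icc (-1:ℝ) 1) volume := hgc.integrableOn_Icc
  apply hgint.congr_fun_ae
  have h0 : ∀ᵐ x : ℝ ∂(volume.restrict (Set.Icc (-1:ℝ) 1)), x ≠ 0 := by
    apply ae_restrict_of_ae
    rw [ae_iff]
    simp
  filter_upwards [h0] with x hx
  rw [if_neg hx]
  have hL : Complex.I * (x:ℂ) ≠ 0 := by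
    simp [Complex.ext_iff, hx]
  have hC : Complex.Gamma ((((α:ℂ) + (β:ℂ) + 1) + Complex.I * x) / 2) ≠ 0 :=
    Complex.Gamma_ne_zero_of_re_pos (hre1 x)
  have hD : Complex.Gamma ((((α:ℂ) - (β:ℂ) + 1) + Complex.I * x) / 2) ≠ 0 :=
    Complex.Gamma_ne_zero_of_re_pos (hre2 x)
  have hG1 : Complex.Gamma (Complex.I * (x:ℂ) + 1) ≠ 0 :=
    Complex.Gamma_ne_zero_of_re_pos (hre3 x)
  have hGadd : Complex.Gamma (Complex.I * (x:ℂ) + 1)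
      = Complex.I * (x:ℂ) * Complex.Gamma (Complex.I * (x:ℂ)) :=
    Complex.Gamma_add_one _ hL
  have hGi0 : Complex.Gamma (Complex.I * (x:ℂ)) ≠ 0 := by
    intro h; rw [h, mul_zero] at hGadd; exact hG1 hGadd
  have hρc : (ρ:ℂ) = (α:ℂ) + (β:ℂ) + 1 := by rw [hρ]; push_cast; ring
  -- rewrite the rpow as an inverse square
  have habs : ‖cherednikC α β (x:ℂ)‖ ^ (-2 : ℝ)
      = (‖(cherednikC α β (x:ℂ)) ^ 2‖)⁻¹ := by
    rw [norm_pow, ← Real.rpow_natCast ‖cherednikC α β (x:ℂ)‖ 2,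
      ← Real.rpow_neg (norm_nonneg _)]
    norm_num
  rw [habs, hgdef]
  rw [show ‖1 - (ρ : ℂ) / (Complex.I * (x : ℂ))‖ *
      (‖(cherednikC α β (x:ℂ)) ^ 2‖)⁻¹
      = ‖(1 - (ρ : ℂ) / (Complex.I * (x : ℂ))) / (cherednikC α β (x:ℂ)) ^ 2‖ by
    rw [norm_div]; ring]
  refine congrArg Norm.norm ?_
  unfold cherednikC
  rw [hρc, hGadd]
  exact key_identity _ _ _ _ _ _ _ hL hA (hB x) hC hD hGi0
end

section
/- Let α ≥ β ≥ -1/2 be real with α > -1/2, ρ = α + β + 1, and let ν be the Plancherel measure on ℝ. Let g : ℝ → ℂ be a measurable function such that for every n ∈ ℕ (including n = 0) the function λ ↦ |λ|^(2n)·g(λ) belongs to L²(ℝ, ν). Let R_g ∈ [0, ∞] denote the supremum of |λ| over the ν-essential support of g, i.e. over the smallest closed subset of ℝ on whose complement g vanishes ν-almost everywhere. Then the sequence n ↦ (∫_ℝ |λ|^(4n)·|g(λ)|² dν(λ))^(1/(4n)) converges in [0, ∞] to R_g as n → ∞. -/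
open Complex MeasureTheory Filter

/-- The density of the Plancherel measure of the Cherednik–Opdam transform:
`λ ↦ |1 − ρ/(iλ)| / (8π·|c_{α,β}(λ)|²)` for `λ ≠ 0`, and `0` at `λ = 0`,
where `ρ = α+β+1`. -/
noncomputable def plancherelDensity (α β : ℝ) (lam : ℝ) : ℝ :=
  if lam = 0 then 0 else
    ‖1 - ((α + β + 1 : ℝ) : ℂ) / (Complex.I * (lam : ℂ))‖ /
      (8 * Real.pi * (‖cherednikC α β (lam : ℂ)‖) ^ 2)

/-- The Plancherel measure `ν` of the Cherednik–Opdam transform on `ℝ`. -/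
noncomputable def plancherelMeasure (α β : ℝ) : Measure ℝ :=
  volume.withDensity (fun lam => ENNReal.ofReal (plancherelDensity α β lam))

/-- The `ν`-essential support of `g`: the intersection of all closed sets outside of
which `g` vanishes `ν`-almost everywhere. -/
def essSupport (ν : Measure ℝ) (g : ℝ → ℂ) : Set ℝ :=
  ⋂₀ {F : Set ℝ | IsClosed F ∧ ∀ᵐ lam ∂ν, lam ∉ F → g lam = 0}

open scoped ENNReal NNReal Topology

lemma aux_null {ν : Measure ℝ} {g : ℝ → ℂ} (hg : Measurable g) {A : Set ℝ}
    (hA : MeasurableSet A) :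
    ν.withDensity (fun l => (‖g l‖₊ : ℝ≥0∞) ^ 2) A = 0 ↔ ∀ᵐ l ∂ν, l ∈ A → g l = 0 := by
  have hw : Measurable fun l => (‖g l‖₊ : ℝ≥0∞) ^ 2 := (hg.nnnorm.coe_nnreal_ennreal).pow_const 2
  rw [withDensity_apply _ hA, lintegral_eq_zero_iff hw, Filter.EventuallyEq,
    ae_restrict_iff' hA]
  constructor
  · intro h
    filter_upwards [h] with l hl hlA
    simpa using hl hlA
  · intro h
    filter_upwards [h] with l hl hlA
    simp [hl hlA]

lemma aux_esssup {ν : Measure ℝ} {g : ℝ → ℂ} (hg : Measurable g) :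
    essSup (fun lam => ENNReal.ofReal |lam|) (ν.withDensity fun l => (‖g l‖₊ : ℝ≥0∞) ^ 2)
      = ⨆ lam ∈ essSupport ν g, ENNReal.ofReal |lam| := by
  set μ := ν.withDensity fun l => (‖g l‖₊ : ℝ≥0∞) ^ 2 with hμ
  set S := essSupport ν g with hS
  set h : ℝ → ℝ≥0∞ := fun lam => ENNReal.ofReal |lam| with hh
  have hSc : μ Sᶜ = 0 := by
    set fam := {F : Set ℝ | IsClosed F ∧ ∀ᵐ lam ∂ν, lam ∉ F → g lam = 0} with hfam
    have hopen : ∀ F : fam, IsOpen (F : Set ℝ)ᶜ := fun F => F.2.1.isOpen_compl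
    obtain ⟨T, hTc, hT⟩ := TopologicalSpace.isOpen_iUnion_countable
      (fun F : fam => (F : Set ℝ)ᶜ) hopen
    have hnull : ∀ F : fam, μ (F : Set ℝ)ᶜ = 0 := by
      intro F
      refine (aux_null hg F.2.1.measurableSet.compl).2 ?_
      filter_upwards [F.2.2] with l hl hlc
      exact hl hlc
    have hScEq : Sᶜ = ⋃ F : fam, (F : Set ℝ)ᶜ := by
      rw [hS]
      simp only [essSupport, Set.compl_sInter, Set.sUnion_image]
      ext x
      simp [hfam]
    rw [hScEq, ← hT]
    exact (measure_biUnion_null_iff hTc).2 fun F _ => hnull F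
  refine le_antisymm ?_ ?_
  · have hae : ∀ᵐ l ∂μ, l ∈ S := by
      rw [ae_iff]
      refine measure_mono_null ?_ hSc
      intro l hl
      exact hl
    refine essSup_le_of_ae_le _ ?_
    filter_upwards [hae] with l hl
    exact le_biSup (fun lam => ENNReal.ofReal |lam|) hl
  · refine iSup₂_le fun l₀ hl₀ => ?_
    by_contra hcon
    push_neg at hcon
    have hE_ne : essSup h μ ≠ ∞ := (hcon.trans ENNReal.ofReal_lt_top).ne
    have htR : (essSup h μ).toReal < |l₀| := (ENNReal.lt_ofReal_iff_toReal_lt hE_ne).1 hcon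
    set r := ((essSup h μ).toReal + |l₀|) / 2 with hr
    have hr1 : (essSup h μ).toReal < r := by rw [hr]; linarith
    have hr2 : r < |l₀| := by rw [hr]; linarith
    set U := {l : ℝ | r < |l|} with hU
    have hUopen : IsOpen U := isOpen_lt continuous_const continuous_abs
    have hl₀U : l₀ ∈ U := hr2
    have hUnull : μ U = 0 := by
      refine measure_mono_null ?_ (ae_iff.1 (ENNReal.ae_le_essSup h))
      intro l hlU
      simp only [Set.mem_setOf_eq, not_le]
      calc essSup h μ < ENNReal.ofReal r := (ENNReal.lt_ofReal_iff_toReal_lt hE_ne).2 hr1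
        _ ≤ ENNReal.ofReal |l| := ENNReal.ofReal_le_ofReal hlU.le
    have hmem : Uᶜ ∈ {F : Set ℝ | IsClosed F ∧ ∀ᵐ lam ∂ν, lam ∉ F → g lam = 0} := by
      refine ⟨hUopen.isClosed_compl, ?_⟩
      filter_upwards [(aux_null hg hUopen.measurableSet).1 hUnull] with l hl hlc
      exact hl (not_not.1 hlc)
    exact (hl₀ Uᶜ hmem) hl₀U

lemma aux_one_tendsto {t : ℝ≥0∞} (ht0 : t ≠ 0) (htt : t ≠ ∞) :
    Tendsto (fun n : ℕ => t ^ ((1 : ℝ) / (4 * n))) atTop (𝓝 1) := by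
  have hpos : 0 < t.toReal := ENNReal.toReal_pos ht0 htt
  have hexp : Tendsto (fun n : ℕ => (1 : ℝ) / (4 * n)) atTop (𝓝 0) := by
    have h4 : Tendsto (fun n : ℕ => (4 : ℝ) * n) atTop atTop :=
      (tendsto_natCast_atTop_atTop (R := ℝ)).const_mul_atTop (by norm_num)
    have := h4.inv_tendsto_atTop
    simp only [Pi.inv_def] at this
    simpa [one_div] using this
  have hcont : ContinuousAt (fun p : ℝ => t.toReal ^ p) 0 :=
    Real.continuousAt_const_rpow hpos.ne'
  have h1 : Tendsto (fun n : ℕ => t.toReal ^ ((1 : ℝ) / (4 * n))) atTop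
      (𝓝 (t.toReal ^ (0 : ℝ))) := hcont.tendsto.comp hexp
  have h2 : Tendsto (fun n : ℕ => ENNReal.ofReal (t.toReal ^ ((1 : ℝ) / (4 * n)))) atTop
      (𝓝 (ENNReal.ofReal (t.toReal ^ (0 : ℝ)))) := (ENNReal.continuous_ofReal.tendsto _).comp h1
  simp only [Real.rpow_zero, ENNReal.ofReal_one] at h2
  refine h2.congr fun n => ?_
  rw [← ENNReal.ofReal_rpow_of_pos hpos, ENNReal.ofReal_toReal htt]

lemma aux_tendsto {μ : Measure ℝ}
    (hfin : ∀ n : ℕ, ∫⁻ l, (ENNReal.ofReal |l|) ^ (4 * n) ∂μ ≠ ∞) :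
    Tendsto (fun n : ℕ => (∫⁻ l, (ENNReal.ofReal |l|) ^ (4 * n) ∂μ) ^ ((1 : ℝ) / (4 * n)))
      atTop (𝓝 (essSup (fun lam => ENNReal.ofReal |lam|) μ)) := by
  set h : ℝ → ℝ≥0∞ := fun lam => ENNReal.ofReal |lam| with hh
  have hmeas : Measurable h := ENNReal.measurable_ofReal.comp continuous_abs.measurable
  have ht : μ Set.univ ≠ ∞ := by simpa using hfin 0
  by_cases ht0 : μ Set.univ = 0
  · have hμ0 : μ = 0 := Measure.measure_univ_eq_zero.1 ht0
    rw [hμ0]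
    simp only [lintegral_zero_measure, essSup_measure_zero]
    refine tendsto_const_nhds.congr' ?_
    filter_upwards [eventually_ge_atTop 1] with n hn
    have hpos : (0 : ℝ) < (1 : ℝ) / (4 * n) := by
      have : (0:ℝ) < (n:ℝ) := by exact_mod_cast hn
      positivity
    rw [ENNReal.zero_rpow_of_pos hpos]
    rfl
  · set M := essSup h μ with hM
    set I : ℕ → ℝ≥0∞ := fun n => ∫⁻ l, h l ^ (4 * n) ∂μ with hI
    set u : ℕ → ℝ≥0∞ := fun n => I n ^ ((1 : ℝ) / (4 * n)) with hu
    have hcast : ∀ n : ℕ, 1 ≤ n → (((4 * n : ℕ) : ℝ)) * ((1 : ℝ) / (4 * (n : ℝ))) = 1 := by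
      intro n hn
      have hn0 : (n : ℝ) ≠ 0 := Nat.cast_ne_zero.2 (by omega)
      push_cast
      field_simp
    have hup : ∀ n : ℕ, 1 ≤ n → u n ≤ M * (μ Set.univ) ^ ((1 : ℝ) / (4 * n)) := by
      intro n hn
      have hIle : I n ≤ M ^ (4 * n) * μ Set.univ := by
        calc I n ≤ ∫⁻ _, M ^ (4 * n) ∂μ := by
              refine lintegral_mono_ae ?_
              filter_upwards [ENNReal.ae_le_essSup h] with l hl
              exact pow_le_pow_left₀ bot_le hl _
          _ = M ^ (4 * n) * μ Set.univ := lintegral_const _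
      have e_nonneg : (0 : ℝ) ≤ (1 : ℝ) / (4 * n) := by positivity
      calc u n ≤ (M ^ (4 * n) * μ Set.univ) ^ ((1 : ℝ) / (4 * n)) :=
            ENNReal.rpow_le_rpow hIle e_nonneg
        _ = M * (μ Set.univ) ^ ((1 : ℝ) / (4 * n)) := by
            rw [ENNReal.mul_rpow_of_nonneg _ _ e_nonneg, ← ENNReal.rpow_natCast M (4 * n),
              ← ENNReal.rpow_mul, hcast n hn, ENNReal.rpow_one]
    have hlimsup : limsup u atTop ≤ M := by
      have hl1 : Tendsto (fun n : ℕ => M * (μ Set.univ) ^ ((1 : ℝ) / (4 * n))) atTop (𝓝 M) := by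
        simpa using ENNReal.Tendsto.const_mul (aux_one_tendsto ht0 ht) (Or.inl one_ne_zero)
      calc limsup u atTop ≤ limsup (fun n : ℕ => M * (μ Set.univ) ^ ((1 : ℝ) / (4 * n))) atTop :=
            limsup_le_limsup (eventually_atTop.2 ⟨1, hup⟩)
        _ = M := hl1.limsup_eq
    have hliminf : M ≤ liminf u atTop := by
      by_contra hcon
      push_neg at hcon
      obtain ⟨c, hc1, hc2⟩ := exists_between hcon
      have hm0 : μ {l | c < h l} ≠ 0 := by
        intro h0
        have hle : M ≤ c := by
          refine essSup_le_of_ae_le _ ?_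
          rw [Filter.EventuallyLE, ae_iff]
          simpa [not_le] using h0
        exact absurd hc2 (not_lt.2 hle)
      have hmt : μ {l | c < h l} ≠ ∞ :=
        ne_top_of_le_ne_top ht (measure_mono (Set.subset_univ _))
      have hlow : ∀ n : ℕ, 1 ≤ n → c * (μ {l | c < h l}) ^ ((1 : ℝ) / (4 * n)) ≤ u n := by
        intro n hn
        have hmark : c ^ (4 * n) * μ {l | c < h l} ≤ I n := by
          calc c ^ (4 * n) * μ {l | c < h l}
              ≤ c ^ (4 * n) * μ {l | c ^ (4 * n) ≤ h l ^ (4 * n)} := by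
                have hsub : {l | c < h l} ⊆ {l | c ^ (4 * n) ≤ h l ^ (4 * n)} := by
                  intro l hl
                  simp only [Set.mem_setOf_eq] at hl ⊢
                  exact pow_le_pow_left₀ bot_le hl.le _
                exact mul_le_mul_right (measure_mono hsub) _
            _ ≤ ∫⁻ l, h l ^ (4 * n) ∂μ :=
                mul_meas_ge_le_lintegral₀ ((hmeas.pow_const _).aemeasurable) _
        have e_nonneg : (0 : ℝ) ≤ (1 : ℝ) / (4 * n) := by positivity
        calc c * (μ {l | c < h l}) ^ ((1 : ℝ) / (4 * n))
            = (c ^ (4 * n) * μ {l | c < h l}) ^ ((1 : ℝ) / (4 * n)) := by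
              rw [ENNReal.mul_rpow_of_nonneg _ _ e_nonneg, ← ENNReal.rpow_natCast c (4 * n),
                ← ENNReal.rpow_mul, hcast n hn, ENNReal.rpow_one]
          _ ≤ u n := ENNReal.rpow_le_rpow hmark e_nonneg
      have hl2 : Tendsto (fun n : ℕ => c * (μ {l | c < h l}) ^ ((1 : ℝ) / (4 * n))) atTop
          (𝓝 c) := by
        simpa using ENNReal.Tendsto.const_mul (aux_one_tendsto hm0 hmt) (Or.inl one_ne_zero)
      have hcle : c ≤ liminf u atTop := by
        calc c = liminf (fun n : ℕ => c * (μ {l | c < h l}) ^ ((1 : ℝ) / (4 * n))) atTop :=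
              hl2.liminf_eq.symm
          _ ≤ liminf u atTop := liminf_le_liminf (eventually_atTop.2 ⟨1, hlow⟩)
      exact absurd hc1 (not_lt.2 hcle)
    exact tendsto_of_le_liminf_of_limsup_le hliminf hlimsup

lemma aux_pointwise (g : ℝ → ℂ) (n : ℕ) (l : ℝ) :
    ENNReal.ofReal (|l| ^ (4 * n) * (‖g l‖) ^ 2)
      = (‖g l‖₊ : ℝ≥0∞) ^ 2 * (ENNReal.ofReal |l|) ^ (4 * n) := by
  rw [ENNReal.ofReal_mul (by positivity), ENNReal.ofReal_pow (abs_nonneg _),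
    ENNReal.ofReal_pow (norm_nonneg _), ofReal_norm, enorm_eq_nnnorm,
    mul_comm]

lemma aux_pointwise2 (g : ℝ → ℂ) (n : ℕ) (l : ℝ) :
    (‖(|l| ^ (2 * n) : ℝ) • g l‖₊ : ℝ≥0∞) ^ (2 : ℝ)
      = (‖g l‖₊ : ℝ≥0∞) ^ 2 * (ENNReal.ofReal |l|) ^ (4 * n) := by
  rw [ENNReal.rpow_two, nnnorm_smul, ENNReal.coe_mul, mul_pow, mul_comm]
  congr 1
  rw [← enorm_eq_nnnorm, ← ofReal_norm, Real.norm_eq_abs, _root_.abs_of_nonneg (by positivity),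
    ENNReal.ofReal_pow (abs_nonneg _), ← pow_mul]
  congr 1
  ring

/-- Support-radius lemma: if `|·|^(2n)·g ∈ L²(ν)` for all `n`, then
`(∫ |λ|^(4n)|g(λ)|² dν)^(1/(4n)) → R_g` in `[0,∞]`, where `R_g` is the supremum of
`|λ|` over the `ν`-essential support of `g`. -/
theorem cherednik_support_radius
    (α β : ℝ) (hβ : -(1/2 : ℝ) ≤ β) (hβα : β ≤ α) (hα : -(1/2 : ℝ) < α)
    (ρ : ℝ) (hρ : ρ = α + β + 1)
    (g : ℝ → ℂ) (hg : Measurable g)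
    (hL2 : ∀ n : ℕ, MemLp (fun lam : ℝ => (|lam| ^ (2 * n) : ℝ) • g lam) 2
      (plancherelMeasure α β)) :
    Tendsto
      (fun n : ℕ =>
        (∫⁻ lam, ENNReal.ofReal (|lam| ^ (4 * n) * (‖g lam‖) ^ 2)
            ∂(plancherelMeasure α β)) ^ ((1 : ℝ) / (4 * n)))
      atTop
      (nhds (⨆ lam ∈ essSupport (plancherelMeasure α β) g, ENNReal.ofReal |lam|)) := by
  set ν := plancherelMeasure α β with hν
  set w : ℝ → ℝ≥0∞ := fun l => (‖g l‖₊ : ℝ≥0∞) ^ 2 with hw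
  have hwm : Measurable w := (hg.nnnorm.coe_nnreal_ennreal).pow_const 2
  set μ := ν.withDensity w with hμdef
  have hhm : ∀ n : ℕ, Measurable fun l : ℝ => (ENNReal.ofReal |l|) ^ (4 * n) := fun n =>
    (ENNReal.measurable_ofReal.comp _root_.continuous_abs.measurable).pow_const _
  have hrw : ∀ n : ℕ,
      (∫⁻ lam, ENNReal.ofReal (|lam| ^ (4 * n) * (‖g lam‖) ^ 2) ∂ν)
        = ∫⁻ l, (ENNReal.ofReal |l|) ^ (4 * n) ∂μ := by
    intro n
    rw [hμdef, lintegral_withDensity_eq_lintegral_mul ν hwm (hhm n)]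
    refine lintegral_congr fun l => ?_
    simpa using aux_pointwise g n l
  have hfin : ∀ n : ℕ, (∫⁻ l, (ENNReal.ofReal |l|) ^ (4 * n) ∂μ) ≠ ∞ := by
    intro n
    have h1 := lintegral_rpow_enorm_lt_top_of_eLpNorm_lt_top (p := 2)
      (by norm_num) (by norm_num) (hL2 n).2
    rw [hμdef, lintegral_withDensity_eq_lintegral_mul ν hwm (hhm n)]
    refine (lt_of_eq_of_lt ?_ h1).ne
    refine lintegral_congr fun l => ?_
    simp only [Pi.mul_apply, ENNReal.toReal_ofNat]
    exact (aux_pointwise2 g n l).symm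
  have hT := aux_tendsto hfin
  rw [aux_esssup hg] at hT
  exact hT.congr fun n => by rw [hrw n]
end
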